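/- The zero solution of the swarm system is unstable: for every integer n ≥ 1 there exists ε > 0 such that for every δ > 0 there is a solution r = (r_1, …, r_n) of the swarm system on [0, ∞) with max_k (|r_k(0)| + |ṙ_k(0)|) < δ, and a time t > 0 with max_k (|r_k(t)| + |ṙ_k(t)|) ≥ ε. -/

import Mathlib

open scoped BigOperators

noncomputable def swarmV (c t : ℝ) : ℝ := Real.exp t / Real.sqrt (Real.exp t ^ 2 + c)

noncomputable def swarmX (c t : ℝ) : ℝ :=
  Real.arsinh (Real.exp t / Real.sqrt c) - Real.arsinh (1 / Real.sqrt c)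

lemma swarm_aux_pos (c : ℝ) (hc : 0 < c) (t : ℝ) : 0 < Real.exp t ^ 2 + c := by
  positivity

lemma swarmV_pos (c : ℝ) (hc : 0 < c) (t : ℝ) : 0 < swarmV c t := by
  unfold swarmV
  exact div_pos (Real.exp_pos t) (Real.sqrt_pos.2 (swarm_aux_pos c hc t))

lemma swarmV_deriv (c : ℝ) (hc : 0 < c) (t : ℝ) :
    HasDerivAt (swarmV c) ((1 - swarmV c t ^ 2) * swarmV c t) t := by
  have hpos := swarm_aux_pos c hc t
  have hg : 0 < Real.sqrt (Real.exp t ^ 2 + c) := Real.sqrt_pos.2 hpos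
  have hinner : HasDerivAt (fun t => Real.exp t ^ 2 + c)
      (2 * Real.exp t ^ 1 * Real.exp t) t :=
    ((Real.hasDerivAt_exp t).pow 2).add_const c
  have hsqrt : HasDerivAt (fun t => Real.sqrt (Real.exp t ^ 2 + c))
      ((2 * Real.exp t ^ 1 * Real.exp t) / (2 * Real.sqrt (Real.exp t ^ 2 + c))) t :=
    hinner.sqrt hpos.ne'
  have h := (Real.hasDerivAt_exp t).div hsqrt hg.ne'
  refine h.congr_deriv ?_
  symm
  have hsq : Real.sqrt (Real.exp t ^ 2 + c) ^ 2 = Real.exp t ^ 2 + c :=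
    Real.sq_sqrt hpos.le
  unfold swarmV
  rw [add_comm (Real.exp t ^ 2) c]
  have hsq' : Real.sqrt (c + Real.exp t ^ 2) ^ 2 = c + Real.exp t ^ 2 :=
    Real.sq_sqrt (by positivity)
  field_simp

lemma swarmX_deriv (c : ℝ) (hc : 0 < c) (t : ℝ) :
    HasDerivAt (swarmX c) (swarmV c t) t := by
  have hsc : 0 < Real.sqrt c := Real.sqrt_pos.2 hc
  have hinner : HasDerivAt (fun t => Real.exp t / Real.sqrt c) (Real.exp t / Real.sqrt c) t :=
    (Real.hasDerivAt_exp t).div_const _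
  have h := ((Real.hasDerivAt_arsinh _).comp t hinner).sub_const (Real.arsinh (1 / Real.sqrt c))
  refine h.congr_deriv ?_
  symm
  unfold swarmV
  rw [eq_comm]
  have h1 : 1 + (Real.exp t / Real.sqrt c) ^ 2 = (Real.exp t ^ 2 + c) / c := by
    field_simp
    rw [Real.sq_sqrt hc.le]
    ring
  rw [h1, Real.sqrt_div (by positivity) c]
  have h2 : 0 < Real.sqrt (Real.exp t ^ 2 + c) := Real.sqrt_pos.2 (by positivity)
  field_simp

/-- `r` (positions) together with `r'` (velocities) is a solution of the swarm system
`r̈ₖ = (1 - |ṙₖ|²) ṙₖ - (rₖ - R)`, `R = (r₁ + ⋯ + rₙ)/n`, on `[0, ∞)`. -/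
def IsSwarmSolution (n : ℕ) (r r' : Fin n → ℝ → ℂ) : Prop :=
  ∀ k, ∀ t : ℝ, 0 ≤ t →
    HasDerivAt (r k) (r' k t) t ∧
    HasDerivAt (r' k)
      (((1 - ‖r' k t‖ ^ 2 : ℝ) : ℂ) * r' k t -
        (r k t - (∑ j, r j t) / (n : ℂ))) t

/-- The zero solution of the swarm system is unstable. -/
theorem zero_solution_unstable (n : ℕ) (hn : 1 ≤ n) :
    ∃ ε > 0, ∀ δ > 0, ∃ r r' : Fin n → ℝ → ℂ,
      IsSwarmSolution n r r' ∧
      (∀ k, ‖r k 0‖ + ‖r' k 0‖ < δ) ∧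
      ∃ t : ℝ, 0 < t ∧ ∃ k, ε ≤ ‖r k t‖ + ‖r' k t‖ := by
  refine ⟨1/2, by norm_num, fun δ hδ => ?_⟩
  set c : ℝ := 1 + δ⁻¹ ^ 2 with hcdef
  have hc : 0 < c := by positivity
  have hc1 : 1 ≤ c := by rw [hcdef]; nlinarith [sq_nonneg δ⁻¹]
  refine ⟨fun _ t => (swarmX c t : ℂ), fun _ t => (swarmV c t : ℂ), ?_, ?_, ?_⟩
  · intro k t _
    constructor
    · exact (swarmX_deriv c hc t).ofReal_comp
    · have h := (swarmV_deriv c hc t).ofReal_comp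
      convert h using 1
      beta_reduce
      have hvpos := swarmV_pos c hc t
      have hsum : (∑ _j : Fin n, (swarmX c t : ℂ)) = (n : ℂ) * (swarmX c t : ℂ) := by
        simp [Finset.sum_const, mul_comm]
      have hn0 : (n : ℂ) ≠ 0 := Nat.cast_ne_zero.2 (by omega)
      rw [hsum, mul_div_cancel_left₀ _ hn0]
      rw [Complex.norm_real, Real.norm_eq_abs, abs_of_pos hvpos]
      push_cast
      ring
  · intro k
    have hx0 : swarmX c 0 = 0 := by
      unfold swarmX; rw [Real.exp_zero]; exact sub_self _
    have hv0 : swarmV c 0 = 1 / Real.sqrt (1 + c) := by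
      unfold swarmV; rw [Real.exp_zero, one_pow]
    beta_reduce
    rw [hx0, hv0]
    simp only [Complex.ofReal_zero, norm_zero, zero_add, Complex.norm_real, Real.norm_eq_abs]
    have hs : δ⁻¹ < Real.sqrt (1 + c) := by
      rw [show (1 : ℝ) + c = 2 + δ⁻¹ ^ 2 by rw [hcdef]; ring]
      have : δ⁻¹ ^ 2 < 2 + δ⁻¹ ^ 2 := by linarith
      calc δ⁻¹ = Real.sqrt (δ⁻¹ ^ 2) := by
              rw [Real.sqrt_sq (by positivity)]
        _ < Real.sqrt (2 + δ⁻¹ ^ 2) := Real.sqrt_lt_sqrt (by positivity) this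
    have hspos : 0 < Real.sqrt (1 + c) := lt_trans (by positivity) hs
    rw [abs_of_pos (by positivity : (0:ℝ) < 1 / Real.sqrt (1 + c))]
    rw [div_lt_iff₀ hspos]
    calc (1 : ℝ) = δ * δ⁻¹ := by field_simp
      _ < δ * Real.sqrt (1 + c) := by
          exact mul_lt_mul_of_pos_left hs hδ
  · have hlogpos : 0 < Real.log c + 1 := by
      have := Real.log_nonneg hc1; linarith
    refine ⟨Real.log c + 1, hlogpos, ⟨0, by omega⟩, ?_⟩
    set t := Real.log c + 1 with htdef
    have het : c ≤ Real.exp t := by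
      calc c = Real.exp (Real.log c) := (Real.exp_log hc).symm
        _ ≤ Real.exp t := Real.exp_le_exp.2 (by linarith)
    have he1 : 1 ≤ Real.exp t := le_trans hc1 het
    have hv : 1/2 ≤ swarmV c t := by
      unfold swarmV
      have hE : 0 < Real.exp t := Real.exp_pos t
      have h1 : Real.exp t ^ 2 + c ≤ 4 * Real.exp t ^ 2 := by nlinarith
      have h2 : Real.sqrt (Real.exp t ^ 2 + c) ≤ 2 * Real.exp t := by
        calc Real.sqrt (Real.exp t ^ 2 + c) ≤ Real.sqrt (4 * Real.exp t ^ 2) :=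
              Real.sqrt_le_sqrt h1
          _ = 2 * Real.exp t := by
              rw [show (4:ℝ) * Real.exp t ^ 2 = (2 * Real.exp t) ^ 2 by ring,
                Real.sqrt_sq (by positivity)]
      have h3 : 0 < Real.sqrt (Real.exp t ^ 2 + c) := Real.sqrt_pos.2 (by positivity)
      rw [le_div_iff₀ h3]
      nlinarith
    have hvabs : ‖(swarmV c t : ℂ)‖ = swarmV c t := by
      rw [Complex.norm_real, Real.norm_eq_abs, abs_of_pos (swarmV_pos c hc t)]
    have := norm_nonneg (swarmX c t : ℂ)
    beta_reduce
    rw [hvabs]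
    linarith
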